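/- For any CABA framework F_c, the set GroundCArg of all ground constrained arguments of F_c (that is, GrCInst(CArg)) equals GrCInst(MGCArg), the set of all ground constrained instances of the most general constrained arguments. -/

import Mathlib

namespace CABAFormal

/-- First-order terms over function symbols `F`; variables are natural numbers. -/
inductive Term (F : Type) : Type
  | var : ℕ → Term F
  | app : F → List (Term F) → Term F

namespace Term

variable {F D : Type}

mutual
  /-- Variables occurring in a term. -/
  def varsT : Term F → Set ℕ
    | .var n => {n}
    | .app _ args => varsL args
  /-- Variables occurring in a list of terms. -/
  def varsL : List (Term F) → Set ℕ
    | [] => ∅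
    | t :: ts => varsT t ∪ varsL ts
end

mutual
  /-- Application of a substitution to a term. -/
  def substT (σ : ℕ → Term F) : Term F → Term F
    | .var n => σ n
    | .app f args => .app f (substL σ args)
  def substL (σ : ℕ → Term F) : List (Term F) → List (Term F)
    | [] => []
    | t :: ts => substT σ t :: substL σ ts
end

mutual
  /-- Evaluation of a term in a structure with domain `D`. -/
  def evalT (funI : F → List D → D) (σ : ℕ → D) : Term F → D
    | .var n => σ n
    | .app f args => funI f (evalL funI σ args)
  def evalL (funI : F → List D → D) (σ : ℕ → D) : List (Term F) → List D
    | [] => []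
    | t :: ts => evalT funI σ t :: evalL funI σ ts
end

end Term

/-- Atomic formulas: a predicate symbol applied to a list of terms. -/
structure Atom (F P : Type) : Type where
  pred : P
  args : List (Term F)

namespace Atom
variable {F P : Type}
def vars (a : Atom F P) : Set ℕ := Term.varsL a.args
def subst (σ : ℕ → Term F) (a : Atom F P) : Atom F P := ⟨a.pred, Term.substL σ a.args⟩
def Ground (a : Atom F P) : Prop := a.vars = ∅
end Atom

/-- An inference rule with an atomic head and a list of atomic body sentences. -/
structure Rule (F P : Type) : Type where
  head : Atom F P
  body : List (Atom F P)

namespace Rule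
variable {F P : Type}
def subst (σ : ℕ → Term F) (r : Rule F P) : Rule F P := ⟨r.head.subst σ, r.body.map (Atom.subst σ)⟩
def vars (r : Rule F P) : Set ℕ := r.head.vars ∪ ⋃ b ∈ r.body, Atom.vars b
end Rule

def setVars {F P : Type} (S : Set (Atom F P)) : Set ℕ := ⋃ a ∈ S, a.vars

def substSet {F P : Type} (σ : ℕ → Term F) (S : Set (Atom F P)) : Set (Atom F P) :=
  Atom.subst σ '' S

/-- A variable renaming: a substitution given by a (finite-support) permutation of variables. -/
def IsRenaming {F : Type} (ρ : ℕ → Term F) : Prop :=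
  ∃ π : Equiv.Perm ℕ, {n | π n ≠ n}.Finite ∧ ρ = fun n => Term.var (π n)

/-- The substitution `{X/t}` sending the variables `xs` to the terms `ts` (componentwise). -/
def mkSubst {F : Type} (xs : List ℕ) (ts : List (Term F)) : ℕ → Term F :=
  fun n => ((xs.zip ts).lookup n).getD (Term.var n)

/-- Two assignments agree on a set of variables. -/
def Agree {D : Type} (σ σ' : ℕ → D) (V : Set ℕ) : Prop := ∀ x ∈ V, σ x = σ' x

/-- A set of atoms is predicate closed if together with `p(t)` it contains `p(t')`
for every tuple `t'` of terms of the same length. -/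
def PredClosed {F P : Type} (L : Set (Atom F P)) : Prop :=
  ∀ (p : P) (ts ts' : List (Term F)), Atom.mk p ts ∈ L → ts'.length = ts.length →
    Atom.mk p ts' ∈ L

/-- A (flat) Constrained Assumption-Based Argumentation framework, together with the
semantics of its theory of constraints (an algebraic structure with domain `D`,
in which a designated predicate `eqP` is interpreted as identity, as required by
the Clark Equality Theory). -/
structure CABA (F P D : Type) : Type where
  /-- the atomic language `L_c` -/
  Lc : Set (Atom F P)
  /-- the atomic constraints `𝒞 ⊆ L_c` -/
  Con : Set (Atom F P)
  /-- the inference rules `ℛ` -/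
  Rules : Set (Rule F P)
  /-- the assumptions `𝒜` -/
  Asm : Set (Atom F P)
  /-- the contrary predicate map: the contrary of `p(t)` is `contrPred p (t)` -/
  contrPred : P → P
  /-- interpretation of function symbols in the structure underlying `CT` -/
  funI : F → List D → D
  /-- interpretation of predicate symbols in the structure underlying `CT` -/
  predI : P → List D → Prop
  /-- the equality predicate of `CT` -/
  eqP : P
  dom_nonempty : Nonempty D
  ground_term : ∃ t : Term F, Term.varsT t = ∅
  con_sub : Con ⊆ Lc
  lc_closed : PredClosed Lc
  con_closed : PredClosed Con
  asm_closed : PredClosed Asm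
  rules_lang : ∀ r ∈ Rules, (r.head ∈ Lc ∧ r.head ∉ Con) ∧ ∀ b ∈ r.body, b ∈ Lc
  /-- rules are in normalised form: heads are predicates applied to distinct variables -/
  rules_norm : ∀ r ∈ Rules, ∃ xs : List ℕ, xs.Nodup ∧ r.head.args = xs.map Term.var
  asm_sub : ∀ a ∈ Asm, a ∈ Lc ∧ a ∉ Con
  asm_nonempty : Asm.Nonempty
  contr_wf : ∀ a ∈ Asm, Atom.mk (contrPred a.pred) a.args ∈ Lc ∧
    Atom.mk (contrPred a.pred) a.args ∉ Con
  /-- flatness: assumptions are not heads of rules -/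
  flat : ∀ r ∈ Rules, r.head ∉ Asm
  eq_con : ∀ t u : Term F, Atom.mk eqP [t, u] ∈ Con
  eq_interp : ∀ a b : D, predI eqP [a, b] ↔ a = b

namespace CABA

variable {F P D : Type}

/-- The contrary of an assumption. -/
def contrary (fc : CABA F P D) (a : Atom F P) : Atom F P := ⟨fc.contrPred a.pred, a.args⟩

/-- Truth of an atom under a variable assignment, in the structure underlying `CT`. -/
def Holds (fc : CABA F P D) (σ : ℕ → D) (a : Atom F P) : Prop :=
  fc.predI a.pred (Term.evalL fc.funI σ a.args)

/-- `CT ⊨ a` for an atom `a` (validity of its universal closure). -/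
def Valid (fc : CABA F P D) (a : Atom F P) : Prop := ∀ σ : ℕ → D, fc.Holds σ a

/-- A set `C` of constraints is consistent: `CT ⊨ ∃(⋀C)`. -/
def ConsistentSet (fc : CABA F P D) (C : Set (Atom F P)) : Prop :=
  ∃ σ : ℕ → D, ∀ c ∈ C, fc.Holds σ c

/-- `CT ⊨ t = u` (for ground terms this is independent of the assignment). -/
def termEq (fc : CABA F P D) (t u : Term F) : Prop :=
  ∀ σ : ℕ → D, Term.evalT fc.funI σ t = Term.evalT fc.funI σ u

/-- `CT ⊨ p(t) ↔ p(t')`, i.e. same predicate and `CT ⊨ t = t'` componentwise. -/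
def atomEq (fc : CABA F P D) (a b : Atom F P) : Prop :=
  a.pred = b.pred ∧ List.Forall₂ fc.termEq a.args b.args

/-- `CT ⊨ ⋀A ↔ ⋀A'` for sets of ground atoms: each atom of each set is `CT`-equivalent
to an atom of the other set. -/
def asmSetEq (fc : CABA F P D) (A B : Set (Atom F P)) : Prop :=
  (∀ a ∈ A, ∃ b ∈ B, fc.atomEq a b) ∧ (∀ b ∈ B, ∃ a ∈ A, fc.atomEq a b)

end CABA

/-- `TightFor fc C A R s` holds iff there is a tight constrained argument (a finite tree)
for claim `s`, supported exactly by the constraints `C`, assumptions `A` and rules `R`: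
every non-leaf node `p(t)` has as children the instantiated body atoms of exactly one
renamed-apart (normalised) rule of `R` with head `p(X)` and `ϑ = {X/t}`, and every leaf
is a constraint in `C`, an assumption in `A`, or `true`. -/
inductive TightFor {F P D : Type} (fc : CABA F P D) :
    Set (Atom F P) → Set (Atom F P) → Set (Rule F P) → Atom F P → Prop
  | asm {a : Atom F P} (ha : a ∈ fc.Asm) : TightFor fc ∅ {a} ∅ a
  | node {p : P} {ts : List (Term F)} {r rv : Rule F P} {xs : List ℕ}
      {CS AS : ℕ → Set (Atom F P)} {RS : ℕ → Set (Rule F P)}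
      (hr : r ∈ fc.Rules)
      (hvar : ∃ ρ : ℕ → Term F, IsRenaming ρ ∧ rv = r.subst ρ)
      (hhead : rv.head = ⟨p, xs.map Term.var⟩)
      (hnodup : xs.Nodup)
      (hlen : xs.length = ts.length)
      (hfresh : (Rule.vars rv \ {n | n ∈ xs}) ∩ Term.varsL ts = ∅)
      (hcon : ∀ i (hi : i < rv.body.length),
        (rv.body.get ⟨i, hi⟩).subst (mkSubst xs ts) ∈ fc.Con →
          CS i = {(rv.body.get ⟨i, hi⟩).subst (mkSubst xs ts)} ∧ AS i = ∅ ∧ RS i = ∅)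
      (hasm : ∀ i (hi : i < rv.body.length),
        (rv.body.get ⟨i, hi⟩).subst (mkSubst xs ts) ∉ fc.Con →
        (rv.body.get ⟨i, hi⟩).subst (mkSubst xs ts) ∈ fc.Asm →
          CS i = ∅ ∧ AS i = {(rv.body.get ⟨i, hi⟩).subst (mkSubst xs ts)} ∧ RS i = ∅)
      (hder : ∀ i (hi : i < rv.body.length),
        (rv.body.get ⟨i, hi⟩).subst (mkSubst xs ts) ∉ fc.Con →
        (rv.body.get ⟨i, hi⟩).subst (mkSubst xs ts) ∉ fc.Asm →
          TightFor fc (CS i) (AS i) (RS i) ((rv.body.get ⟨i, hi⟩).subst (mkSubst xs ts)))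
      (hsep : ∀ i j (hi : i < rv.body.length) (hj : j < rv.body.length), i ≠ j →
        (setVars (CS i ∪ AS i) ∩ setVars (CS j ∪ AS j)) ⊆
          Atom.vars ((rv.body.get ⟨i, hi⟩).subst (mkSubst xs ts)) ∩
            Atom.vars ((rv.body.get ⟨j, hj⟩).subst (mkSubst xs ts)))
      (hsep' : ∀ i (hi : i < rv.body.length),
        setVars (CS i ∪ AS i) ∩ (Term.varsL ts ∪ Rule.vars rv) ⊆
          Atom.vars ((rv.body.get ⟨i, hi⟩).subst (mkSubst xs ts))) :
      TightFor fc (⋃ i ∈ Finset.range rv.body.length, CS i)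
        (⋃ i ∈ Finset.range rv.body.length, AS i)
        ({r} ∪ ⋃ i ∈ Finset.range rv.body.length, RS i)
        ⟨p, ts⟩

/-- A constrained argument `C ∪ A ⊢_R s`, represented by its support and claim. -/
structure CArgument (F P : Type) : Type where
  con : Set (Atom F P)
  asm : Set (Atom F P)
  rules : Set (Rule F P)
  claim : Atom F P

namespace CArgument
variable {F P : Type}
def vars (α : CArgument F P) : Set ℕ := setVars α.con ∪ setVars α.asm ∪ α.claim.vars
def Ground (α : CArgument F P) : Prop := α.vars = ∅
def subst (σ : ℕ → Term F) (α : CArgument F P) : CArgument F P :=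
  ⟨substSet σ α.con, substSet σ α.asm, α.rules, α.claim.subst σ⟩
end CArgument

section Args

variable {F P D : Type}

/-- A tight constrained argument (with consistent constraint set). -/
def IsTightArg (fc : CABA F P D) (α : CArgument F P) : Prop :=
  TightFor fc α.con α.asm α.rules α.claim ∧ fc.ConsistentSet α.con

/-- The set `TCArg` of all tight constrained arguments. -/
def TCArg (fc : CABA F P D) : Set (CArgument F P) := {α | IsTightArg fc α}

/-- Most general: the claim is of the form `p(X)` for a tuple of distinct variables. -/
def IsMostGeneral (α : CArgument F P) : Prop :=
  ∃ xs : List ℕ, xs.Nodup ∧ α.claim.args = xs.map Term.var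

/-- The set `MGCArg` of all most general constrained arguments. -/
def MGCArg (fc : CABA F P D) : Set (CArgument F P) := {α | IsTightArg fc α ∧ IsMostGeneral α}

/-- `α'` is a constrained instance (via `ϑ` and `D`) of `α`. -/
def ConstrainedInstanceOf (fc : CABA F P D) (α' α : CArgument F P) : Prop :=
  ∃ (ϑ : ℕ → Term F) (Dc : Set (Atom F P)), Dc ⊆ fc.Con ∧
    α'.con = substSet ϑ α.con ∪ Dc ∧ α'.asm = substSet ϑ α.asm ∧
    α'.rules = α.rules ∧ α'.claim = α.claim.subst ϑ ∧ fc.ConsistentSet α'.con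

/-- The set `CArg` of all constrained arguments. -/
def CArg (fc : CABA F P D) : Set (CArgument F P) :=
  {α | ∃ β ∈ TCArg fc, ConstrainedInstanceOf fc α β}

/-- `GrCInst α`: the ground constrained instances of `α`. -/
def GrCInst (fc : CABA F P D) (α : CArgument F P) : Set (CArgument F P) :=
  {α' | ConstrainedInstanceOf fc α' α ∧ α'.Ground}

/-- `GrCInst Γ` for a set `Γ` of constrained arguments. -/
def GrCInstSet (fc : CABA F P D) (Γ : Set (CArgument F P)) : Set (CArgument F P) :=
  ⋃ α ∈ Γ, GrCInst fc α

/-- Equality of ground constrained arguments modulo ground constraints. -/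
def EqModGC (fc : CABA F P D) (α β : CArgument F P) : Prop :=
  fc.asmSetEq α.asm β.asm ∧ fc.atomEq α.claim β.claim

/-- Equality of sets of ground constrained arguments modulo ground constraints. -/
def SetEqModGC (fc : CABA F P D) (S T : Set (CArgument F P)) : Prop :=
  (∀ x ∈ S, ∃ y ∈ T, EqModGC fc x y) ∧ (∀ y ∈ T, ∃ x ∈ S, EqModGC fc x y)

/-- The equivalence relation `≡` on sets of constrained arguments: the smallest
equivalence relation identifying ground arguments equal modulo ground constraints,
identifying `{α}` with `GrCInst α`, and a congruence for union. -/
inductive AEquiv (fc : CABA F P D) : Set (CArgument F P) → Set (CArgument F P) → Prop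
  | refl (Γ : Set (CArgument F P)) : AEquiv fc Γ Γ
  | symm {Γ Δ : Set (CArgument F P)} : AEquiv fc Γ Δ → AEquiv fc Δ Γ
  | trans {Γ Δ Θ : Set (CArgument F P)} : AEquiv fc Γ Δ → AEquiv fc Δ Θ → AEquiv fc Γ Θ
  | groundEq {α β : CArgument F P} (hα : α ∈ CArg fc) (hβ : β ∈ CArg fc)
      (gα : α.Ground) (gβ : β.Ground) (h : EqModGC fc α β) : AEquiv fc {α} {β}
  | grInst {α : CArgument F P} (hα : α ∈ CArg fc) : AEquiv fc {α} (GrCInst fc α)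
  | unionCongr (Γ : Set (CArgument F P)) {Δ₁ Δ₂ : Set (CArgument F P)} :
      AEquiv fc Δ₁ Δ₂ → AEquiv fc (Γ ∪ Δ₁) (Γ ∪ Δ₂)

/-- `α` fully attacks `β` (Definition of full attack, including the case where the
claim of `α` and the attacked assumption of `β` have different argument tuples,
handled via fresh linking variables). -/
def FullAttacks (fc : CABA F P D) (α β : CArgument F P) : Prop :=
  ∃ a ∈ β.asm, α.claim.pred = fc.contrPred a.pred ∧
    ((α.claim.args = a.args ∧
        ∀ σ : ℕ → D, (∀ d ∈ β.con, fc.Holds σ d) →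
          ∃ σ' : ℕ → D, Agree σ' σ α.claim.vars ∧ ∀ c ∈ α.con, fc.Holds σ' c) ∨
      (α.claim.args ≠ a.args ∧
        ∀ σ : ℕ → D, (∀ d ∈ β.con, fc.Holds σ d) →
          ∃ σ' : ℕ → D,
            List.Forall₂ (fun t u => Term.evalT fc.funI σ' t = Term.evalT fc.funI σ u)
              α.claim.args a.args ∧
            ∀ c ∈ α.con, fc.Holds σ' c))

/-- `α` partially attacks `β`. -/
def PartialAttacks (fc : CABA F P D) (α β : CArgument F P) : Prop :=
  ∃ a ∈ β.asm, α.claim.pred = fc.contrPred a.pred ∧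
    ((α.claim.args = a.args ∧
        ∃ σ₁ σ₂ : ℕ → D, Agree σ₁ σ₂ α.claim.vars ∧
          (∀ c ∈ α.con, fc.Holds σ₁ c) ∧ ∀ d ∈ β.con, fc.Holds σ₂ d) ∨
      (α.claim.args ≠ a.args ∧
        ∃ σ₁ σ₂ : ℕ → D,
          List.Forall₂ (fun t u => Term.evalT fc.funI σ₁ t = Term.evalT fc.funI σ₂ u)
            α.claim.args a.args ∧
          (∀ c ∈ α.con, fc.Holds σ₁ c) ∧ ∀ d ∈ β.con, fc.Holds σ₂ d))

/-- Attack between ground constrained arguments, viewed as arguments of `Ground(F_c)`. -/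
def GAttacks (fc : CABA F P D) (α β : CArgument F P) : Prop :=
  ∃ a ∈ β.asm, α.claim = fc.contrary a

/-- `Γ ⊆ CArg` is a conflict-free extension of `F_c`:
`GrCInst(Γ)` is conflict-free in `Ground(F_c)`. -/
def ConflictFreeExt (fc : CABA F P D) (Γ : Set (CArgument F P)) : Prop :=
  ∀ α ∈ GrCInstSet fc Γ, ∀ β ∈ GrCInstSet fc Γ, ¬ GAttacks fc α β

/-- `Γ ⊆ CArg` is an admissible extension of `F_c`. -/
def AdmissibleExt (fc : CABA F P D) (Γ : Set (CArgument F P)) : Prop :=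
  ConflictFreeExt fc Γ ∧
    ∀ α ∈ GrCInstSet fc Γ, ∀ β ∈ GrCInstSet fc (CArg fc),
      GAttacks fc β α → ∃ γ ∈ GrCInstSet fc Γ, GAttacks fc γ β

/-- `Γ ⊆ CArg` is a stable extension of `F_c`. -/
def StableExt (fc : CABA F P D) (Γ : Set (CArgument F P)) : Prop :=
  ConflictFreeExt fc Γ ∧
    ∀ β ∈ GrCInstSet fc (CArg fc), β ∉ GrCInstSet fc Γ →
      ∃ α ∈ GrCInstSet fc Γ, GAttacks fc α β

/-- Non-ground conflict-freeness. -/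
def NGCF (fc : CABA F P D) (S : Set (CArgument F P)) : Prop :=
  ¬ ∃ α ∈ S, ∃ β ∈ S, PartialAttacks fc α β

/-- The set of constrained arguments fully attacked by some member of `S`. -/
def FAtt (fc : CABA F P D) (S : Set (CArgument F P)) : Set (CArgument F P) :=
  {β | β ∈ CArg fc ∧ ∃ α ∈ S, FullAttacks fc α β}

/-- A set of constrained arguments is non-overlapping: partial and full attacks coincide. -/
def NonOverlapping (fc : CABA F P D) (Δ : Set (CArgument F P)) : Prop :=
  ∀ α ∈ Δ, ∀ β ∈ Δ, (PartialAttacks fc α β ↔ FullAttacks fc α β)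

/-- Two constrained arguments have common constrained instances. -/
def CommonCI (fc : CABA F P D) (α β : CArgument F P) : Prop :=
  ∃ α' ∈ GrCInst fc α, ∃ β' ∈ GrCInst fc β, EqModGC fc α' β'

/-- A set of constrained arguments is instance-disjoint. -/
def InstanceDisjoint (fc : CABA F P D) (Δ : Set (CArgument F P)) : Prop :=
  ∀ α ∈ Δ, ∀ β ∈ Δ, α ≠ β → ¬ CommonCI fc α β

/-- The set of equality constraints `{X = t}` linking variables `xs` to terms `ts`. -/
def eqAtoms (fc : CABA F P D) (xs : List ℕ) (ts : List (Term F)) : Set (Atom F P) :=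
  {a | ∃ pr ∈ (xs.map Term.var).zip ts, a = Atom.mk fc.eqP [pr.1, pr.2]}

end Args

/-- A rule of a generic (ground) language. -/
structure GRule (S : Type) : Type where
  head : S
  body : List S

/-- A 4-tuple `⟨L, ℛ, 𝒜, ⎯⟩` as candidate ABA framework. -/
structure ABAF (S : Type) : Type where
  lang : Set S
  rules : Set (GRule S)
  asm : Set S
  contrary : S → S

/-- The 4-tuple is an ABA framework: rules are over the language, the assumptions are a
non-empty subset of the language, and the contrary map is total from assumptions into
the language. -/
def ABAF.IsABA {S : Type} (fr : ABAF S) : Prop :=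
  (∀ r ∈ fr.rules, r.head ∈ fr.lang ∧ ∀ b ∈ r.body, b ∈ fr.lang) ∧
    fr.asm ⊆ fr.lang ∧ fr.asm.Nonempty ∧ ∀ a ∈ fr.asm, fr.contrary a ∈ fr.lang

def Rule.toGRule {F P : Type} (r : Rule F P) : GRule (Atom F P) := ⟨r.head, r.body⟩

/-- The grounding `Ground(F_c)` of a CABA framework. -/
def groundABA {F P D : Type} (fc : CABA F P D) : ABAF (Atom F P) where
  lang := {a | a ∈ fc.Lc ∧ a.Ground}
  rules := {gr | (∃ r ∈ fc.Rules, ∃ ϑ : ℕ → Term F, gr = (r.subst ϑ).toGRule ∧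
        (r.subst ϑ).head.Ground ∧ ∀ b ∈ (r.subst ϑ).body, b.Ground) ∨
      (∃ c, c ∈ fc.Con ∧ c.Ground ∧ fc.Valid c ∧ gr = ⟨c, []⟩)}
  asm := {a | a ∈ fc.Asm ∧ a.Ground}
  contrary := fc.contrary

/-- An argument `A ⊢_R s` in a (flat) ABA framework: a finite tree with root the claim,
whose non-leaf nodes have as children the body of exactly one rule of `R` with matching
head, and whose leaves are assumptions in `A` or `true`. -/
inductive ABADeriv {S : Type} (fr : ABAF S) : Set S → Set (GRule S) → S → Prop
  | asm {a : S} (ha : a ∈ fr.asm) : ABADeriv fr {a} ∅ a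
  | node {r : GRule S} {AS : ℕ → Set S} {RS : ℕ → Set (GRule S)}
      (hr : r ∈ fr.rules)
      (hasm : ∀ i (hi : i < r.body.length), r.body.get ⟨i, hi⟩ ∈ fr.asm →
        AS i = {r.body.get ⟨i, hi⟩} ∧ RS i = ∅)
      (hder : ∀ i (hi : i < r.body.length), r.body.get ⟨i, hi⟩ ∉ fr.asm →
        ABADeriv fr (AS i) (RS i) (r.body.get ⟨i, hi⟩)) :
      ABADeriv fr (⋃ i ∈ Finset.range r.body.length, AS i)
        ({r} ∪ ⋃ i ∈ Finset.range r.body.length, RS i) r.head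

section Split

variable {F P D : Type}

/-- Two sets of constraints are mutually exclusive: `CT ⊨ ¬∃(e₁ ∧ e₂)`. -/
def MutuallyExclusive (fc : CABA F P D) (E₁ E₂ : Set (Atom F P)) : Prop :=
  ¬ ∃ σ : ℕ → D, (∀ e ∈ E₁, fc.Holds σ e) ∧ ∀ e ∈ E₂, fc.Holds σ e

/-- `Es` is a constraint split `cs(C,D)` of the sets `C` and `D` of constraints. -/
def IsConstraintSplit (fc : CABA F P D) (C Dc : Set (Atom F P))
    (Es : List (Set (Atom F P))) : Prop :=
  (∀ E ∈ Es, E ⊆ fc.Con ∧ E.Finite) ∧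
  (∀ σ : ℕ → D,
    ((¬ ∃ σ' : ℕ → D, Agree σ' σ (setVars C ∩ setVars Dc) ∧ ∀ c ∈ C, fc.Holds σ' c) ∧
        ∀ d ∈ Dc, fc.Holds σ d) ↔
      ∃ E ∈ Es, ∀ e ∈ E, fc.Holds σ e) ∧
  (∀ E ∈ Es, fc.ConsistentSet E) ∧
  Es.Pairwise (MutuallyExclusive fc)

/-- `CT` is closed under negation. -/
def ClosedUnderNeg (fc : CABA F P D) : Prop :=
  ∀ c ∈ fc.Con, ∃ ds : List (Atom F P), (∀ d ∈ ds, d ∈ fc.Con) ∧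
    (∀ σ : ℕ → D, (¬ fc.Holds σ c) ↔ ∃ d ∈ ds, fc.Holds σ d) ∧
    ds.Pairwise (fun d₁ d₂ => ¬ ∃ σ : ℕ → D, fc.Holds σ d₁ ∧ fc.Holds σ d₂)

/-- `CT` is closed under existential quantification. -/
def ClosedUnderEx (fc : CABA F P D) : Prop :=
  ∀ C : Set (Atom F P), C ⊆ fc.Con → C.Finite → ∀ V : Set ℕ,
    ∃ Es : List (Set (Atom F P)), (∀ E ∈ Es, E ⊆ fc.Con ∧ E.Finite) ∧
      ∀ σ : ℕ → D, (∃ σ' : ℕ → D, Agree σ' σ V ∧ ∀ c ∈ C, fc.Holds σ' c) ↔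
        ∃ E ∈ Es, ∀ e ∈ E, fc.Holds σ e

/-- `Bs` is an output of the splitting operation `split_ci(α,β)`. -/
def IsSplitCI (fc : CABA F P D) (α β : CArgument F P) (Bs : List (CArgument F P)) : Prop :=
  ∃ (C A : Set (Atom F P)) (R R' : Set (Rule F P)) (s : Atom F P)
      (Dc : Set (Atom F P)) (Es : List (Set (Atom F P))),
    C.Finite ∧ Dc.Finite ∧ C ⊆ fc.Con ∧ Dc ⊆ fc.Con ∧
    AEquiv fc {α} {CArgument.mk C A R s} ∧ AEquiv fc {β} {CArgument.mk Dc A R' s} ∧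
    setVars C ∩ setVars Dc ⊆ setVars A ∪ s.vars ∧
    fc.ConsistentSet (C ∪ Dc) ∧
    IsConstraintSplit fc C Dc Es ∧
    Bs = Es.map fun E => CArgument.mk E A R' s

/-- `Bs` is an output of the splitting operation `split_pa(α,β)`. -/
def IsSplitPA (fc : CABA F P D) (α β : CArgument F P) (Bs : List (CArgument F P)) : Prop :=
  ∃ (C A₁ A₂ : Set (Atom F P)) (R₁ R₂ : Set (Rule F P)) (s₁ s₂ a : Atom F P)
      (Dc : Set (Atom F P)) (Es : List (Set (Atom F P))),
    C.Finite ∧ Dc.Finite ∧ C ⊆ fc.Con ∧ Dc ⊆ fc.Con ∧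
    AEquiv fc {α} {CArgument.mk C A₁ R₁ s₁} ∧ AEquiv fc {β} {CArgument.mk Dc A₂ R₂ s₂} ∧
    a ∈ A₂ ∧ s₁ = fc.contrary a ∧
    setVars C ∩ setVars Dc ⊆ s₁.vars ∧
    fc.ConsistentSet (C ∪ Dc) ∧
    IsConstraintSplit fc C Dc Es ∧
    Bs = CArgument.mk (C ∪ Dc) A₂ R₂ s₂ :: (Es.map fun E => CArgument.mk E A₂ R₂ s₂)

/-- One step of the Argument Splitting procedure. -/
inductive SplitStep (fc : CABA F P D) :
    Set (CArgument F P) → Set (CArgument F P) → Prop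
  | ci {Δ : Set (CArgument F P)} {α β : CArgument F P} {Bs : List (CArgument F P)}
      (hα : α ∈ Δ) (hβ : β ∈ Δ) (h : CommonCI fc α β) (hs : IsSplitCI fc α β Bs) :
      SplitStep fc Δ ((Δ \ {β}) ∪ {b | b ∈ Bs})
  | pa {Δ : Set (CArgument F P)} {α β : CArgument F P} {Bs : List (CArgument F P)}
      (hα : α ∈ Δ) (hβ : β ∈ Δ) (hp : PartialAttacks fc α β) (hf : ¬ FullAttacks fc α β)
      (hs : IsSplitPA fc α β Bs) :
      SplitStep fc Δ ((Δ \ {β}) ∪ {b | b ∈ Bs})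

end Split

end CABAFormal
namespace CABAFormal

open scoped Classical

variable {F P D : Type}

namespace Term

theorem substL_eq_map (σ : ℕ → Term F) : ∀ l : List (Term F), substL σ l = l.map (substT σ)
  | [] => rfl
  | t :: ts => by rw [substL, substL_eq_map σ ts]; rfl

theorem evalL_eq_map (funI : F → List D → D) (σ : ℕ → D) :
    ∀ l : List (Term F), evalL funI σ l = l.map (evalT funI σ)
  | [] => rfl
  | t :: ts => by rw [evalL, evalL_eq_map funI σ ts]; rfl

theorem varsL_eq : ∀ l : List (Term F), varsL l = ⋃ t ∈ l, varsT t
  | [] => by simp [varsL]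
  | t :: ts => by simp [varsL, varsL_eq ts]

mutual
theorem substT_id : ∀ t : Term F, substT Term.var t = t
  | .var n => rfl
  | .app f args => by rw [substT, substL_id args]
theorem substL_id : ∀ l : List (Term F), substL Term.var l = l
  | [] => rfl
  | t :: ts => by rw [substL, substT_id t, substL_id ts]
end

mutual
theorem substT_comp (σ₁ σ₂ : ℕ → Term F) :
    ∀ t : Term F, substT σ₂ (substT σ₁ t) = substT (fun n => substT σ₂ (σ₁ n)) t
  | .var n => rfl
  | .app f args => by rw [substT, substT, substT, substL_comp σ₁ σ₂ args]
theorem substL_comp (σ₁ σ₂ : ℕ → Term F) :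
    ∀ l : List (Term F), substL σ₂ (substL σ₁ l) = substL (fun n => substT σ₂ (σ₁ n)) l
  | [] => rfl
  | t :: ts => by rw [substL, substL, substL, substT_comp σ₁ σ₂ t, substL_comp σ₁ σ₂ ts]
end

mutual
theorem substT_congr {σ σ' : ℕ → Term F} :
    ∀ t : Term F, (∀ v ∈ varsT t, σ v = σ' v) → substT σ t = substT σ' t
  | .var n, h => h n rfl
  | .app f args, h => by rw [substT, substT, substL_congr args (by simpa [varsT] using h)]
theorem substL_congr {σ σ' : ℕ → Term F} :
    ∀ l : List (Term F), (∀ v ∈ varsL l, σ v = σ' v) → substL σ l = substL σ' l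
  | [], _ => rfl
  | t :: ts, h => by
      rw [substL, substL, substT_congr t (fun v hv => h v (Or.inl hv)),
        substL_congr ts (fun v hv => h v (Or.inr hv))]
end

mutual
theorem varsT_finite : ∀ t : Term F, (varsT t).Finite
  | .var n => Set.finite_singleton n
  | .app f args => varsL_finite args
theorem varsL_finite : ∀ l : List (Term F), (varsL l).Finite
  | [] => Set.finite_empty
  | t :: ts => (varsT_finite t).union (varsL_finite ts)
end

mutual
theorem varsT_substT (σ : ℕ → Term F) :
    ∀ t : Term F, varsT (substT σ t) ⊆ ⋃ v ∈ varsT t, varsT (σ v)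
  | .var n => by simp [substT, varsT]
  | .app f args => by simpa [substT, varsT] using varsL_substL σ args
theorem varsL_substL (σ : ℕ → Term F) :
    ∀ l : List (Term F), varsL (substL σ l) ⊆ ⋃ v ∈ varsL l, varsT (σ v)
  | [] => by simp [substL, varsL]
  | t :: ts => by
      rw [substL, varsL, varsL]
      apply Set.union_subset
      · exact (varsT_substT σ t).trans (by gcongr <;> simp [Set.subset_def]; tauto)
      · exact (varsL_substL σ ts).trans (by gcongr <;> simp [Set.subset_def]; tauto)
end

mutual
theorem evalT_substT (funI : F → List D → D) (σ : ℕ → D) (θ : ℕ → Term F) :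
    ∀ t : Term F, evalT funI σ (substT θ t) = evalT funI (fun n => evalT funI σ (θ n)) t
  | .var n => rfl
  | .app f args => by rw [substT, evalT, evalT, evalL_substL funI σ θ args]
theorem evalL_substL (funI : F → List D → D) (σ : ℕ → D) (θ : ℕ → Term F) :
    ∀ l : List (Term F), evalL funI σ (substL θ l) = evalL funI (fun n => evalT funI σ (θ n)) l
  | [] => rfl
  | t :: ts => by rw [substL, evalL, evalL, evalT_substT funI σ θ t, evalL_substL funI σ θ ts]
end

theorem varsT_mem_subset_varsL {t : Term F} {l : List (Term F)} (h : t ∈ l) :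
    varsT t ⊆ varsL l := by
  rw [varsL_eq]; exact Set.subset_biUnion_of_mem h

end Term


namespace Atom

theorem subst_id (a : Atom F P) : a.subst Term.var = a := by
  obtain ⟨p, args⟩ := a
  simp [subst, Term.substL_id]

theorem subst_comp (σ₁ σ₂ : ℕ → Term F) (a : Atom F P) :
    (a.subst σ₁).subst σ₂ = a.subst (fun n => Term.substT σ₂ (σ₁ n)) := by
  simp [subst, Term.substL_comp]

theorem subst_congr {σ σ' : ℕ → Term F} (a : Atom F P)
    (h : ∀ v ∈ a.vars, σ v = σ' v) : a.subst σ = a.subst σ' := by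
  simp only [subst, mk.injEq, true_and]
  exact Term.substL_congr a.args h

theorem vars_finite (a : Atom F P) : a.vars.Finite := Term.varsL_finite a.args

theorem length_subst (σ : ℕ → Term F) (a : Atom F P) :
    (a.subst σ).args.length = a.args.length := by
  simp [subst, Term.substL_eq_map]

theorem pred_subst (σ : ℕ → Term F) (a : Atom F P) : (a.subst σ).pred = a.pred := rfl

theorem vars_subst (σ : ℕ → Term F) (a : Atom F P) :
    (a.subst σ).vars ⊆ ⋃ v ∈ a.vars, Term.varsT (σ v) :=
  Term.varsL_substL σ a.args

end Atom

theorem PredClosed.subst_mem {L : Set (Atom F P)} (hL : PredClosed L) {a : Atom F P}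
    (σ : ℕ → Term F) (h : a ∈ L) : a.subst σ ∈ L := by
  obtain ⟨p, args⟩ := a
  exact hL p args _ h (by simp [Term.substL_eq_map])

theorem PredClosed.mem_of_subst_mem {L : Set (Atom F P)} (hL : PredClosed L) {a : Atom F P}
    {σ : ℕ → Term F} (h : a.subst σ ∈ L) : a ∈ L := by
  obtain ⟨p, args⟩ := a
  exact hL p _ args h (by simp [Term.substL_eq_map])

theorem PredClosed.subst_mem_iff {L : Set (Atom F P)} (hL : PredClosed L) {a : Atom F P}
    {σ : ℕ → Term F} : a.subst σ ∈ L ↔ a ∈ L :=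
  ⟨hL.mem_of_subst_mem, hL.subst_mem σ⟩

theorem substSet_id (S : Set (Atom F P)) : substSet Term.var S = S := by
  simp [substSet, Set.image_congr' Atom.subst_id]

theorem substSet_comp (σ₁ σ₂ : ℕ → Term F) (S : Set (Atom F P)) :
    substSet σ₂ (substSet σ₁ S) = substSet (fun n => Term.substT σ₂ (σ₁ n)) S := by
  simp only [substSet, ← Set.image_comp]
  exact Set.image_congr' (fun a => Atom.subst_comp σ₁ σ₂ a)

theorem substSet_union (σ : ℕ → Term F) (S T : Set (Atom F P)) :
    substSet σ (S ∪ T) = substSet σ S ∪ substSet σ T := Set.image_union _ _ _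

theorem substSet_empty (σ : ℕ → Term F) : substSet σ (∅ : Set (Atom F P)) = ∅ :=
  Set.image_empty _

theorem substSet_singleton (σ : ℕ → Term F) (a : Atom F P) :
    substSet σ {a} = {a.subst σ} := Set.image_singleton

theorem setVars_union (S T : Set (Atom F P)) :
    setVars (S ∪ T) = setVars S ∪ setVars T := Set.biUnion_union _ _ _

theorem setVars_empty : setVars (∅ : Set (Atom F P)) = ∅ := by simp [setVars]

theorem setVars_singleton (a : Atom F P) : setVars ({a} : Set (Atom F P)) = a.vars := by
  simp [setVars]

theorem vars_subset_setVars {a : Atom F P} {S : Set (Atom F P)} (h : a ∈ S) :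
    a.vars ⊆ setVars S := Set.subset_biUnion_of_mem h

theorem substSet_congr {σ σ' : ℕ → Term F} {S : Set (Atom F P)}
    (h : ∀ v ∈ setVars S, σ v = σ' v) : substSet σ S = substSet σ' S :=
  Set.image_congr fun a ha => Atom.subst_congr a fun v hv => h v (vars_subset_setVars ha hv)

theorem CABA.consistent_of_substSet (fc : CABA F P D) {θ : ℕ → Term F} {C : Set (Atom F P)}
    (h : fc.ConsistentSet (substSet θ C)) : fc.ConsistentSet C := by
  obtain ⟨σ, hσ⟩ := h
  refine ⟨fun n => Term.evalT fc.funI σ (θ n), fun c hc => ?_⟩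
  have := hσ (c.subst θ) ⟨c, hc, rfl⟩
  simpa [CABA.Holds, Atom.subst, Term.evalL_substL] using this

theorem mkSubst_not_mem {xs : List ℕ} : ∀ {ts : List (Term F)} {x : ℕ}, x ∉ xs →
    mkSubst xs ts x = Term.var x := by
  induction xs with
  | nil => intro ts x _; simp [mkSubst]
  | cons a as ih =>
    intro ts x hx
    cases ts with
    | nil => simp [mkSubst]
    | cons t ts' =>
      have hxa : (x == a) = false := by
        simp only [beq_eq_false_iff_ne, ne_eq]
        exact fun h => hx (h ▸ List.mem_cons_self (a := a) (l := as))
      have := ih (ts := ts') (x := x) (fun h => hx (List.mem_cons_of_mem a h))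
      simpa [mkSubst, List.zip_cons_cons, List.lookup, hxa] using this

theorem mkSubst_get {xs : List ℕ} : ∀ {ts : List (Term F)} {k : ℕ}
    (hk : k < xs.length) (hk' : k < ts.length), xs.Nodup →
    mkSubst xs ts (xs.get ⟨k, hk⟩) = ts.get ⟨k, hk'⟩ := by
  induction xs with
  | nil => intro ts k hk hk'; simp at hk
  | cons a as ih =>
    intro ts k hk hk' hnd
    cases ts with
    | nil => simp at hk'
    | cons t ts' =>
      cases k with
      | zero => simp [mkSubst, List.zip_cons_cons, List.lookup]
      | succ k =>
        have hkk : k < as.length := by simpa using hk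
        have hne : (as[k]'hkk == a) = false := by
          simp only [beq_eq_false_iff_ne, ne_eq]
          intro h
          exact (List.nodup_cons.mp hnd).1 (h ▸ as.get_mem ⟨k, hkk⟩)
        have := ih (ts := ts') (k := k) hkk (by simpa using hk')
          (List.nodup_cons.mp hnd).2
        simpa [mkSubst, List.get_eq_getElem, List.zip_cons_cons, List.lookup, hne] using this

theorem lookup_zip_mem {xs : List ℕ} : ∀ {ts : List (Term F)} {v : ℕ} {t : Term F},
    (xs.zip ts).lookup v = some t → t ∈ ts := by
  induction xs with
  | nil => intro ts v t h; simp [List.lookup] at h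
  | cons a as ih =>
    intro ts v t h
    cases ts with
    | nil => simp [List.lookup] at h
    | cons u ts' =>
      rw [List.zip_cons_cons, List.lookup] at h
      cases hva : v == a with
      | true =>
        rw [hva] at h
        exact (Option.some_inj.mp h) ▸ List.mem_cons_self (a := u) (l := ts')
      | false =>
        rw [hva] at h
        exact List.mem_cons_of_mem u (ih h)

theorem varsT_mkSubst (xs : List ℕ) (ts : List (Term F)) (v : ℕ) :
    Term.varsT (mkSubst xs ts v) ⊆ Term.varsL ts ∪ {v} := by
  unfold mkSubst
  cases h : (xs.zip ts).lookup v with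
  | none => simp [Term.varsT]
  | some t =>
    simp only [Option.getD_some]
    exact (Term.varsT_mem_subset_varsL (lookup_zip_mem h)).trans Set.subset_union_left

theorem substL_mkSubst_map_var {xs : List ℕ} {ts : List (Term F)}
    (hnd : xs.Nodup) (hlen : xs.length = ts.length) :
    Term.substL (mkSubst xs ts) (xs.map Term.var) = ts := by
  have hmap : Term.substL (mkSubst xs ts) (xs.map Term.var) = xs.map (mkSubst xs ts) := by
    rw [Term.substL_eq_map, List.map_map]; rfl
  rw [hmap]
  apply List.ext_get
  · simp [hlen]
  · intro k h1 h2
    have hk : k < xs.length := by simpa using h1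
    simp only [List.get_eq_getElem, List.getElem_map]
    exact mkSubst_get hk h2 hnd

theorem Rule.body_subst (σ : ℕ → Term F) (r : Rule F P) :
    (r.subst σ).body = r.body.map (Atom.subst σ) := rfl

theorem Rule.head_subst (σ : ℕ → Term F) (r : Rule F P) :
    (r.subst σ).head = r.head.subst σ := rfl

theorem Rule.vars_finite (r : Rule F P) : r.vars.Finite := by
  apply Set.Finite.union (Atom.vars_finite _)
  exact Set.Finite.biUnion (r.body.finite_toSet) (fun b _ => Atom.vars_finite b)

theorem Atom.vars_subst_renaming (π : ℕ → ℕ) (a : Atom F P) :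
    (a.subst (fun n => Term.var (π n))).vars ⊆ π '' a.vars := by
  refine (Atom.vars_subst _ a).trans ?_
  intro v hv
  simp only [Set.mem_iUnion] at hv
  obtain ⟨w, hw, hv⟩ := hv
  have hv2 : v = π w := by simpa [Term.varsT] using hv
  exact ⟨w, hw, hv2.symm⟩

theorem Rule.vars_subst_renaming (π : ℕ → ℕ) (r : Rule F P) :
    (r.subst (fun n => Term.var (π n))).vars ⊆ π '' r.vars := by
  unfold Rule.vars
  apply Set.union_subset
  · exact (Atom.vars_subst_renaming π r.head).trans (Set.image_mono Set.subset_union_left)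
  · intro v hv
    simp only [Rule.body_subst, Set.mem_iUnion, List.mem_map] at hv
    obtain ⟨b, ⟨b₀, hb₀, rfl⟩, hv⟩ := hv
    obtain ⟨w, hw, rfl⟩ := Atom.vars_subst_renaming π b₀ hv
    exact ⟨w, Or.inr (Set.mem_biUnion hb₀ hw), rfl⟩

theorem Atom.vars_mem_body_subset {b : Atom F P} {r : Rule F P} (h : b ∈ r.body) :
    b.vars ⊆ r.vars := Set.subset_union_right.trans' (Set.subset_biUnion_of_mem h)

/-- The involution swapping `[0,N)` with `[N,2N)`. -/
def blockSwapFun (N : ℕ) : ℕ → ℕ := fun x =>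
  if x < N then x + N else if x < 2 * N then x - N else x

theorem blockSwapFun_involutive (N : ℕ) : Function.Involutive (blockSwapFun N) := by
  intro x
  unfold blockSwapFun
  split_ifs <;> omega

def blockSwap (N : ℕ) : Equiv.Perm ℕ := (blockSwapFun_involutive N).toPerm

theorem blockSwap_apply (N : ℕ) (x : ℕ) : blockSwap N x = blockSwapFun N x := rfl

theorem blockSwap_lt (N : ℕ) {x : ℕ} (h : x < N) : blockSwap N x = x + N := by
  simp [blockSwap_apply, blockSwapFun, h]

theorem blockSwap_support_finite (N : ℕ) : {n | blockSwap N n ≠ n}.Finite := by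
  apply Set.Finite.subset (Set.finite_Iio (2 * N))
  intro n hn
  simp only [Set.mem_setOf_eq, blockSwap_apply, blockSwapFun] at hn
  simp only [Set.mem_Iio]
  by_contra h
  push_neg at h
  rw [if_neg (by omega), if_neg (by omega)] at hn
  exact hn rfl

theorem blockSwap_invol (N : ℕ) (x : ℕ) : blockSwap N (blockSwap N x) = x :=
  blockSwapFun_involutive N x

/-- Sequential choice of pairwise-disjoint fresh variable sets. -/
theorem seqChoice {X : Type} (x₀ : X) (Wof : X → Set ℕ) (Q : ℕ → X → Prop)
    (Base : Set ℕ) (hB : Base.Finite) :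
    ∀ m : ℕ, (∀ i, i < m → ∀ V' : Set ℕ, V'.Finite → Base ⊆ V' →
      ∃ x : X, (Wof x).Finite ∧ Wof x ∩ V' = ∅ ∧ Q i x) →
    ∃ g : ℕ → X, (∀ i, i < m → (Wof (g i)).Finite ∧ Wof (g i) ∩ Base = ∅ ∧ Q i (g i)) ∧
      ∀ i j, i < m → j < m → i ≠ j → Wof (g i) ∩ Wof (g j) = ∅ := by
  intro m
  induction m with
  | zero => exact fun _ => ⟨fun _ => x₀, fun i hi => absurd hi (by omega),
      fun i j hi _ _ => absurd hi (by omega)⟩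
  | succ m ihm =>
    intro H
    obtain ⟨g, hg, hdisj⟩ := ihm (fun i hi => H i (by omega))
    have hfin : (Base ∪ ⋃ i ∈ Finset.range m, Wof (g i)).Finite := by
      apply hB.union
      apply Set.Finite.biUnion (Finset.range m).finite_toSet
      intro i hi
      exact (hg i (by simpa using hi)).1
    obtain ⟨x, hxf, hxd, hxQ⟩ := H m (by omega) _ hfin Set.subset_union_left
    refine ⟨Function.update g m x, fun i hi => ?_, fun i j hi hj hij => ?_⟩
    · rcases Nat.lt_or_ge i m with h | h
      · rw [Function.update_of_ne (by omega)]
        exact hg i h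
      · have : i = m := by omega
        subst this
        rw [Function.update_self]
        refine ⟨hxf, ?_, hxQ⟩
        apply Set.eq_empty_of_subset_empty
        rw [← hxd]
        exact Set.inter_subset_inter_right _ Set.subset_union_left
    · have key : ∀ k, k < m → Wof x ∩ Wof (g k) = ∅ := by
        intro k hk
        apply Set.eq_empty_of_subset_empty
        rw [← hxd]
        apply Set.inter_subset_inter_right
        have hsub : Wof (g k) ⊆ ⋃ i ∈ Finset.range m, Wof (g i) :=
          Set.subset_biUnion_of_mem (u := fun i => Wof (g i))
            (show k ∈ (Finset.range m : Set ℕ) by simpa using hk)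
        exact hsub.trans Set.subset_union_right
      rcases Nat.lt_or_ge i m with h | h
      · rw [Function.update_of_ne (by omega)]
        rcases Nat.lt_or_ge j m with h' | h'
        · rw [Function.update_of_ne (by omega)]
          exact hdisj i j h h' hij
        · have : j = m := by omega
          subst this
          rw [Function.update_self, Set.inter_comm]
          exact key i h
      · have h2 : j < m := by omega
        have hi2 : i = m := by omega
        rw [hi2, Function.update_self, Function.update_of_ne (by omega)]
        exact key j h2

theorem get_body_subst (σ : ℕ → Term F) (r : Rule F P) (d : Atom F P) {i : ℕ}
    (hi : i < (r.subst σ).body.length) :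
    (r.subst σ).body.get ⟨i, hi⟩ = (r.body.getD i d).subst σ := by
  have him : i < r.body.length := by simpa [Rule.body_subst] using hi
  simp [Rule.body_subst, List.get_eq_getElem, List.getElem_map, List.getD_eq_getElem, him]

theorem length_body_subst (σ : ℕ → Term F) (r : Rule F P) :
    (r.subst σ).body.length = r.body.length := by simp [Rule.body_subst]

theorem getD_mem_body {r : Rule F P} {d : Atom F P} {i : ℕ} (hi : i < r.body.length) :
    r.body.getD i d ∈ r.body := by
  rw [List.getD_eq_getElem _ _ hi]
  exact List.getElem_mem _

theorem exists_bound_of_finite {S : Set ℕ} (hS : S.Finite) : ∃ N, ∀ x ∈ S, x < N := by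
  obtain ⟨b, hb⟩ := hS.bddAbove
  exact ⟨b + 1, fun x hx => Nat.lt_succ_of_le (hb hx)⟩

theorem setVars_biUnion_range (S : ℕ → Set (Atom F P)) (m : ℕ) :
    setVars (⋃ i ∈ Finset.range m, S i) = ⋃ i ∈ Finset.range m, setVars (S i) := by
  ext v
  simp only [setVars, Set.mem_iUnion]
  constructor
  · rintro ⟨a, ⟨i, hi, ha⟩, hv⟩
    exact ⟨i, hi, a, ha, hv⟩
  · rintro ⟨i, hi, a, ha, hv⟩
    exact ⟨a, ⟨i, hi, ha⟩, hv⟩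

theorem lift_tight (fc : CABA F P D) :
    ∀ {C A : Set (Atom F P)} {R : Set (Rule F P)} {o : Atom F P},
      TightFor fc C A R o →
      ∀ (s : Atom F P) (θ : ℕ → Term F) (V : Set ℕ),
        V.Finite → s.vars ⊆ V → o = s.subst θ →
        ∃ (C' A' : Set (Atom F P)) (ϑ : ℕ → Term F) (W : Set ℕ),
          W.Finite ∧ W ∩ V = ∅ ∧
          TightFor fc C' A' R s ∧
          setVars C' ∪ setVars A' ⊆ s.vars ∪ W ∧
          (∀ v, v ∉ W → ϑ v = θ v) ∧
          C = substSet ϑ C' ∧ A = substSet ϑ A' := by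
  intro C A R o h
  induction h with
  | @asm a ha =>
    intro s θ V hVfin hsV heq
    have hs : s ∈ fc.Asm := fc.asm_closed.mem_of_subst_mem (heq ▸ ha)
    refine ⟨∅, {s}, θ, ∅, Set.finite_empty, by simp, TightFor.asm hs, ?_,
      fun v _ => rfl, by simp [substSet_empty], by simp [substSet_singleton, heq]⟩
    simp [setVars_empty, setVars_singleton]
  | @node p ts r rv xs CS AS RS hr hvar hhead hnodup hlen hfresh hcon hasm hder hsep hsep' ih =>
    intro s θ V hVfin hsV heq
    obtain ⟨sp, sargs⟩ := s
    rw [show (Atom.mk sp sargs).subst θ = Atom.mk sp (Term.substL θ sargs) from rfl,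
      Atom.mk.injEq] at heq
    obtain ⟨rfl, rfl⟩ := heq
    obtain ⟨ρ, ⟨π, hπfin, hρ⟩, hrv⟩ := hvar
    subst hρ hrv
    obtain ⟨xs₀, hxs₀nd, hhd₀⟩ := fc.rules_norm r hr
    have hheadpred : r.head.pred = p := congrArg Atom.pred hhead
    have hxsπ : xs = xs₀.map π := by
      have h1 : (r.head.subst (fun n => Term.var (π n))).args = xs.map Term.var :=
        congrArg Atom.args hhead
      rw [show (r.head.subst (fun n => Term.var (π n))).args
            = Term.substL (fun n => Term.var (π n)) r.head.args from rfl, hhd₀,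
        Term.substL_eq_map, List.map_map] at h1
      have h2 : List.map ((Term.substT fun n => Term.var (π n)) ∘ Term.var) xs₀
          = List.map (Term.var : ℕ → Term F) (xs₀.map π) := by
        rw [List.map_map]; rfl
      rw [h2] at h1
      have hinj : Function.Injective (Term.var : ℕ → Term F) := fun a b hab => by
        cases hab; rfl
      exact ((List.map_injective_iff.mpr hinj) h1).symm
    set m := r.body.length with hm
    obtain ⟨N, hN⟩ := exists_bound_of_finite (hVfin.union (Rule.vars_finite r))
    set π₂ : Equiv.Perm ℕ := blockSwap N with hπ₂
    set ρ₂ : ℕ → Term F := fun n => Term.var (π₂ n) with hρ₂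
    set xs' : List ℕ := xs₀.map π₂ with hxs'
    -- freshness of the π₂-image of the rule variables
    have himg : ∀ x ∈ Rule.vars r, π₂ x = x + N := fun x hx =>
      blockSwap_lt N (hN x (Or.inr hx))
    have himgV : ∀ u ∈ π₂ '' Rule.vars r, u ∉ V := by
      rintro u ⟨y, hy, rfl⟩ hu
      have := hN _ (Or.inl hu)
      rw [himg y hy] at this
      omega
    set τc : ℕ → Term F := fun u =>
      if u ∈ π₂ '' (Rule.vars r \ {n | n ∈ xs₀}) then Term.var (π (π₂ u)) else θ u with hτc
    have hτcV : ∀ v ∈ V, τc v = θ v := by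
      intro v hv
      have : v ∉ π₂ '' (Rule.vars r \ {n | n ∈ xs₀}) := by
        intro hmem
        exact himgV v (Set.image_mono Set.diff_subset hmem) hv
      simp only [hτc, if_neg this]
    set bD : ℕ → Atom F P := fun i => r.body.getD i (Atom.mk p []) with hbD
    have hbmem : ∀ i, i < m → bD i ∈ r.body := fun i hi => getD_mem_body hi
    have hbvars : ∀ i, i < m → (bD i).vars ⊆ Rule.vars r := fun i hi =>
      Atom.vars_mem_body_subset (hbmem i hi)
    set cOld : ℕ → Atom F P := fun i =>
      ((bD i).subst (fun n => Term.var (π n))).subst (mkSubst xs (Term.substL θ sargs))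
      with hcOld
    set cNew : ℕ → Atom F P := fun i => ((bD i).subst ρ₂).subst (mkSubst xs' sargs) with hcNew
    -- basic length facts
    have hlen_old : (r.subst (fun n => Term.var (π n))).body.length = m :=
      length_body_subst _ r
    have hlen_new : (r.subst ρ₂).body.length = m := length_body_subst _ r
    have hlenxs₀ : xs₀.length = xs.length := by rw [hxsπ, List.length_map]
    have hlensargs : xs.length = sargs.length := by
      rw [hlen]; simp [Term.substL_eq_map]
    have hxs'nd : xs'.Nodup := hxs₀nd.map π₂.injective
    have hgetOld : ∀ i (hi : i < (r.subst (fun n => Term.var (π n))).body.length),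
        (r.subst (fun n => Term.var (π n))).body.get ⟨i, hi⟩
          = (bD i).subst (fun n => Term.var (π n)) := fun i hi =>
      get_body_subst _ r (Atom.mk p []) hi
    have hgetNew : ∀ i (hi : i < (r.subst ρ₂).body.length),
        (r.subst ρ₂).body.get ⟨i, hi⟩ = (bD i).subst ρ₂ := fun i hi =>
      get_body_subst _ r (Atom.mk p []) hi
    -- the key relation between old and new children
    have hsargsV : Term.varsL sargs ⊆ V := hsV
    have key : ∀ i, i < m → cOld i = (cNew i).subst τc := by
      intro i hi
      simp only [hcOld, hcNew]
      rw [Atom.subst_comp, Atom.subst_comp, Atom.subst_comp]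
      apply Atom.subst_congr
      intro n hn
      have hnr : n ∈ Rule.vars r := hbvars i hi hn
      show Term.substT (mkSubst xs (Term.substL θ sargs)) (Term.var (π n))
          = Term.substT τc (Term.substT (mkSubst xs' sargs) (ρ₂ n))
      have hρ₂n : ρ₂ n = Term.var (π₂ n) := rfl
      rw [hρ₂n]
      show mkSubst xs (Term.substL θ sargs) (π n)
          = Term.substT τc (mkSubst xs' sargs (π₂ n))
      by_cases hn₀ : n ∈ xs₀
      · obtain ⟨⟨k, hk⟩, hkn⟩ := List.mem_iff_get.mp hn₀
        have hkxs : k < xs.length := by rw [← hlenxs₀]; exact hk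
        have hkts : k < (Term.substL θ sargs).length := by rw [← hlen]; exact hkxs
        have hksargs : k < sargs.length := by rw [← hlensargs]; exact hkxs
        have hkxs' : k < xs'.length := by rw [hxs', List.length_map]; exact hk
        have hπn : xs.get ⟨k, hkxs⟩ = π n := by
          rw [List.get_of_eq hxsπ ⟨k, hkxs⟩]
          simp only [Fin.cast_mk, List.get_eq_getElem, List.getElem_map]
          rw [← hkn]
          simp [List.get_eq_getElem]
        have hπ₂n : xs'.get ⟨k, hkxs'⟩ = π₂ n := by
          rw [List.get_of_eq hxs' ⟨k, hkxs'⟩]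
          simp only [Fin.cast_mk, List.get_eq_getElem, List.getElem_map]
          rw [← hkn]
          simp [List.get_eq_getElem]
        rw [← hπn, ← hπ₂n, mkSubst_get hkxs hkts hnodup, mkSubst_get hkxs' hksargs hxs'nd]
        have hcongr : Term.substT τc (sargs.get ⟨k, hksargs⟩)
            = Term.substT θ (sargs.get ⟨k, hksargs⟩) := by
          apply Term.substT_congr
          intro v hv
          exact hτcV v (hsargsV (Term.varsT_mem_subset_varsL (sargs.get_mem ⟨k, hksargs⟩) hv))
        rw [hcongr, List.get_of_eq (Term.substL_eq_map θ sargs) ⟨k, hkts⟩]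
        simp [Fin.cast_mk, List.get_eq_getElem, List.getElem_map]
      · have hπxs : π n ∉ xs := by
          rw [hxsπ]
          intro hmem
          obtain ⟨y, hy, hyn⟩ := List.mem_map.mp hmem
          exact hn₀ (π.injective hyn ▸ hy)
        have hπ₂xs' : π₂ n ∉ xs' := by
          rw [hxs']
          intro hmem
          obtain ⟨y, hy, hyn⟩ := List.mem_map.mp hmem
          exact hn₀ (π₂.injective hyn ▸ hy)
        rw [mkSubst_not_mem hπxs, mkSubst_not_mem hπ₂xs']
        show Term.var (π n) = τc (π₂ n)
        have hmem : π₂ n ∈ π₂ '' (Rule.vars r \ {n | n ∈ xs₀}) := ⟨n, ⟨hnr, hn₀⟩, rfl⟩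
        rw [hτc]
        simp only [if_pos hmem]
        rw [show π₂ (π₂ n) = n from blockSwap_invol N n]
    -- membership transfer between old and new children
    have hConIff : ∀ i, i < m → (cOld i ∈ fc.Con ↔ cNew i ∈ fc.Con) := by
      intro i hi
      rw [key i hi]
      exact fc.con_closed.subst_mem_iff
    have hAsmIff : ∀ i, i < m → (cOld i ∈ fc.Asm ↔ cNew i ∈ fc.Asm) := by
      intro i hi
      rw [key i hi]
      exact fc.asm_closed.subst_mem_iff
    -- bound on the variables of the new children
    have hcNewB : ∀ i, i < m → (cNew i).vars ⊆ Term.varsL sargs ∪ π₂ '' Rule.vars r := by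
      intro i hi
      simp only [hcNew]
      refine (Atom.vars_subst _ _).trans ?_
      intro v hv
      simp only [Set.mem_iUnion] at hv
      obtain ⟨w, hw, hv⟩ := hv
      have hw' : w ∈ π₂ '' Rule.vars r := by
        have := Atom.vars_subst_renaming (fun x => π₂ x) (bD i) (by rw [← hρ₂] at *; exact hw)
        exact Set.image_mono (hbvars i hi) this
      rcases varsT_mkSubst xs' sargs w hv with h | h
      · exact Or.inl h
      · rw [Set.mem_singleton_iff] at h
        exact Or.inr (h ▸ hw')
    set Base : Set ℕ := V ∪ π₂ '' Rule.vars r with hBase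
    have hBfin : Base.Finite := hVfin.union ((Rule.vars_finite r).image π₂)
    have hsargsB : Term.varsL sargs ⊆ Base := hsargsV.trans Set.subset_union_left
    have hcNewBase : ∀ i, i < m → (cNew i).vars ⊆ Base := fun i hi =>
      (hcNewB i hi).trans (Set.union_subset hsargsB Set.subset_union_right)
    -- repackaged hypotheses about the old tree
    have hcOldget : ∀ i (hi' : i < (Rule.subst (fun n => Term.var (π n)) r).body.length),
        Atom.subst (mkSubst xs (Term.substL θ sargs))
          ((Rule.subst (fun n => Term.var (π n)) r).body.get ⟨i, hi'⟩) = cOld i := by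
      intro i hi'
      rw [hgetOld i hi']
    have hcNewget : ∀ i (hi' : i < (Rule.subst ρ₂ r).body.length),
        Atom.subst (mkSubst xs' sargs) ((Rule.subst ρ₂ r).body.get ⟨i, hi'⟩) = cNew i := by
      intro i hi'
      rw [hgetNew i hi']
    have hcon' : ∀ i, i < m → cOld i ∈ fc.Con →
        CS i = {cOld i} ∧ AS i = ∅ ∧ RS i = ∅ := by
      intro i hi hc
      have hi' : i < (Rule.subst (fun n => Term.var (π n)) r).body.length :=
        lt_of_lt_of_eq hi hlen_old.symm
      have h := hcon i hi'
      rw [hcOldget i hi'] at h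
      exact h hc
    have hasm' : ∀ i, i < m → cOld i ∉ fc.Con → cOld i ∈ fc.Asm →
        CS i = ∅ ∧ AS i = {cOld i} ∧ RS i = ∅ := by
      intro i hi hc ha
      have hi' : i < (Rule.subst (fun n => Term.var (π n)) r).body.length :=
        lt_of_lt_of_eq hi hlen_old.symm
      have h := hasm i hi'
      rw [hcOldget i hi'] at h
      exact h hc ha
    have ih' : ∀ i, i < m → cOld i ∉ fc.Con → cOld i ∉ fc.Asm →
        ∀ (s : Atom F P) (θ' : ℕ → Term F) (V' : Set ℕ),
          V'.Finite → s.vars ⊆ V' → cOld i = s.subst θ' →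
          ∃ C' A' ϑ W, W.Finite ∧ W ∩ V' = ∅ ∧
            TightFor fc C' A' (RS i) s ∧
            setVars C' ∪ setVars A' ⊆ s.vars ∪ W ∧
            (∀ v, v ∉ W → ϑ v = θ' v) ∧ CS i = substSet ϑ C' ∧ AS i = substSet ϑ A' := by
      intro i hi
      have hi' : i < (Rule.subst (fun n => Term.var (π n)) r).body.length :=
        lt_of_lt_of_eq hi hlen_old.symm
      have h := ih i hi'
      rw [hcOldget i hi'] at h
      exact h
    -- choose the data for each child, with pairwise disjoint fresh variables
    have H : ∀ i, i < m → ∀ V' : Set ℕ, V'.Finite → Base ⊆ V' →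
        ∃ x : Set (Atom F P) × Set (Atom F P) × (ℕ → Term F) × Set ℕ,
          (x.2.2.2).Finite ∧ x.2.2.2 ∩ V' = ∅ ∧
          ((cNew i ∈ fc.Con → x.1 = {cNew i} ∧ x.2.1 = ∅) ∧
          (cNew i ∉ fc.Con → cNew i ∈ fc.Asm → x.1 = ∅ ∧ x.2.1 = {cNew i}) ∧
          (cNew i ∉ fc.Con → cNew i ∉ fc.Asm → TightFor fc x.1 x.2.1 (RS i) (cNew i)) ∧
          (setVars x.1 ∪ setVars x.2.1 ⊆ (cNew i).vars ∪ x.2.2.2) ∧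
          (∀ v, v ∉ x.2.2.2 → x.2.2.1 v = τc v) ∧
          CS i = substSet x.2.2.1 x.1 ∧ AS i = substSet x.2.2.1 x.2.1) := by
      intro i hi V' hV' hBV'
      by_cases hc : cNew i ∈ fc.Con
      · obtain ⟨h1, h2, _⟩ := hcon' i hi ((hConIff i hi).mpr hc)
        refine ⟨({cNew i}, ∅, τc, ∅), Set.finite_empty, by simp, fun _ => ⟨rfl, rfl⟩,
          fun hx _ => absurd hc hx, fun hx _ => absurd hc hx, ?_, fun v _ => rfl, ?_, ?_⟩
        · simp [setVars_singleton, setVars_empty]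
        · rw [h1, substSet_singleton, ← key i hi]
        · rw [h2, substSet_empty]
      · by_cases ha : cNew i ∈ fc.Asm
        · obtain ⟨h1, h2, _⟩ := hasm' i hi (fun hx => hc ((hConIff i hi).mp hx))
            ((hAsmIff i hi).mpr ha)
          refine ⟨(∅, {cNew i}, τc, ∅), Set.finite_empty, by simp,
            fun hx => absurd hx hc, fun _ _ => ⟨rfl, rfl⟩,
            fun _ hx => absurd ha hx, ?_, fun v _ => rfl, ?_, ?_⟩
          · simp [setVars_singleton, setVars_empty]
          · rw [h1, substSet_empty]
          · rw [h2, substSet_singleton, ← key i hi]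
        · obtain ⟨C', A', ϑ', W, hWf, hWd, htf, hbound, hoff, hCeq, hAeq⟩ :=
            ih' i hi (fun hx => hc ((hConIff i hi).mp hx))
              (fun hx => ha ((hAsmIff i hi).mp hx)) (cNew i) τc V' hV'
              ((hcNewBase i hi).trans hBV') (key i hi)
          exact ⟨(C', A', ϑ', W), hWf, hWd, fun hx => absurd hx hc,
            fun _ hx => absurd hx ha, fun _ _ => htf, hbound, hoff, hCeq, hAeq⟩
    obtain ⟨g, hg, hdisj⟩ :=
      seqChoice (X := Set (Atom F P) × Set (Atom F P) × (ℕ → Term F) × Set ℕ)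
        (∅, ∅, Term.var, ∅) (fun x => x.2.2.2) _ Base hBfin m H
    have hWfin' : ∀ i, i < m → ((g i).2.2.2).Finite := fun i hi => (hg i hi).1
    have hWBase : ∀ i, i < m → (g i).2.2.2 ∩ Base = ∅ := fun i hi => (hg i hi).2.1
    have q1 := fun i hi => (hg i hi).2.2.1
    have q2 := fun i hi => (hg i hi).2.2.2.1
    have q3 := fun i hi => (hg i hi).2.2.2.2.1
    have q4 : ∀ i, i < m → ∀ v,
        v ∈ setVars (g i).1 ∪ setVars (g i).2.1 → v ∈ (cNew i).vars ∪ (g i).2.2.2 :=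
      fun i hi v hv => (hg i hi).2.2.2.2.2.1 hv
    have q5 : ∀ i, i < m → ∀ v, v ∉ (g i).2.2.2 → (g i).2.2.1 v = τc v :=
      fun i hi => (hg i hi).2.2.2.2.2.2.1
    have q6 : ∀ i, i < m → CS i = substSet (g i).2.2.1 (g i).1 :=
      fun i hi => (hg i hi).2.2.2.2.2.2.2.1
    have q7 : ∀ i, i < m → AS i = substSet (g i).2.2.1 (g i).2.1 :=
      fun i hi => (hg i hi).2.2.2.2.2.2.2.2
    have hWnotBase : ∀ i, i < m → ∀ v ∈ (g i).2.2.2, v ∉ Base := by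
      intro i hi v hv hvB
      have h := hWBase i hi
      rw [Set.eq_empty_iff_forall_notMem] at h
      exact h v ⟨hv, hvB⟩
    have hWdisj : ∀ i j, i < m → j < m → i ≠ j → ∀ v ∈ (g i).2.2.2, v ∉ (g j).2.2.2 := by
      intro i j hi hj hij v hv hv'
      have h := hdisj i j hi hj hij
      rw [Set.eq_empty_iff_forall_notMem] at h
      exact h v ⟨hv, hv'⟩
    have hrhead : r.head = Atom.mk p (xs₀.map Term.var) := by
      calc r.head = Atom.mk r.head.pred r.head.args := rfl
        _ = Atom.mk p (xs₀.map Term.var) := by rw [hheadpred, hhd₀]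
    have hheadnew : (Rule.subst ρ₂ r).head = Atom.mk p (xs'.map Term.var) := by
      rw [Rule.head_subst, hrhead]
      show Atom.mk p (Term.substL ρ₂ (xs₀.map Term.var)) = _
      rw [Term.substL_eq_map, List.map_map, hxs', List.map_map]
      rfl
    have hrvars' : Rule.vars (Rule.subst ρ₂ r) ⊆ π₂ '' Rule.vars r := by
      rw [hρ₂]
      exact Rule.vars_subst_renaming (fun x => π₂ x) r
    have htree : TightFor fc (⋃ i ∈ Finset.range ((Rule.subst ρ₂ r).body.length), (g i).1)
        (⋃ i ∈ Finset.range ((Rule.subst ρ₂ r).body.length), (g i).2.1)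
        ({r} ∪ ⋃ i ∈ Finset.range ((Rule.subst ρ₂ r).body.length), RS i)
        (Atom.mk p sargs) := by
      refine TightFor.node (r := r) (rv := Rule.subst ρ₂ r) (xs := xs')
        (CS := fun i => (g i).1) (AS := fun i => (g i).2.1) (RS := RS) hr
        ⟨ρ₂, ⟨π₂, blockSwap_support_finite N, hρ₂⟩, rfl⟩ hheadnew hxs'nd ?_ ?_ ?_ ?_ ?_ ?_ ?_
      · -- hlen
        rw [hxs', List.length_map, hlenxs₀, hlensargs]
      · -- hfresh
        apply Set.eq_empty_of_subset_empty
        rintro v ⟨hv1, hv2⟩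
        exact absurd (hsargsV hv2) (fun hvV => himgV v (hrvars' hv1.1) hvV)
      · -- hcon
        intro i hi' hcm
        rw [hcNewget i hi'] at hcm ⊢
        have him : i < m := lt_of_lt_of_eq hi' hlen_new
        obtain ⟨e1, e2⟩ := q1 i him hcm
        exact ⟨e1, e2, (hcon' i him ((hConIff i him).mpr hcm)).2.2⟩
      · -- hasm
        intro i hi' hcm ham
        rw [hcNewget i hi'] at hcm ham ⊢
        have him : i < m := lt_of_lt_of_eq hi' hlen_new
        obtain ⟨e1, e2⟩ := q2 i him hcm ham
        refine ⟨e1, e2, ?_⟩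
        exact (hasm' i him (fun hx => hcm ((hConIff i him).mp hx))
          ((hAsmIff i him).mpr ham)).2.2
      · -- hder
        intro i hi' h1 h2
        rw [hcNewget i hi'] at h1 h2 ⊢
        exact q3 i (lt_of_lt_of_eq hi' hlen_new) h1 h2
      · -- hsep
        intro i j hi' hj' hij
        rw [hcNewget i hi', hcNewget j hj']
        have him : i < m := lt_of_lt_of_eq hi' hlen_new
        have hjm : j < m := lt_of_lt_of_eq hj' hlen_new
        rw [setVars_union]
        rintro v ⟨hvi, hvj⟩
        rcases q4 i him v hvi with hvc | hvw
        · rcases q4 j hjm v (by rwa [setVars_union] at hvj) with hvc' | hvw'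
          · exact ⟨hvc, hvc'⟩
          · exact absurd (hcNewBase i him hvc) (hWnotBase j hjm v hvw')
        · rcases q4 j hjm v (by rwa [setVars_union] at hvj) with hvc' | hvw'
          · exact absurd (hcNewBase j hjm hvc') (hWnotBase i him v hvw)
          · exact absurd hvw' (hWdisj i j him hjm hij v hvw)
      · -- hsep'
        intro i hi'
        rw [hcNewget i hi']
        have him : i < m := lt_of_lt_of_eq hi' hlen_new
        rw [setVars_union]
        rintro v ⟨hv1, hv2⟩
        have hvB : v ∈ Base := by
          rcases hv2 with h | h
          · exact Set.mem_union_left _ (hsargsV h)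
          · exact Set.mem_union_right _ (hrvars' h)
        rcases q4 i him v hv1 with h | h
        · exact h
        · exact absurd hvB (hWnotBase i him v h)
    set Wt : Set ℕ := π₂ '' Rule.vars r ∪ ⋃ i ∈ Finset.range m, (g i).2.2.2 with hWt
    set ϑ : ℕ → Term F := fun u =>
      if h : ∃ i, i < m ∧ u ∈ (g i).2.2.2 then (g (Classical.choose h)).2.2.1 u else τc u
      with hϑ
    have hϑW' : ∀ i, i < m → ∀ u ∈ (g i).2.2.2, ϑ u = (g i).2.2.1 u := by
      intro i hi u hu
      have hex : ∃ j, j < m ∧ u ∈ (g j).2.2.2 := ⟨i, hi, hu⟩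
      rw [hϑ]
      simp only [dif_pos hex]
      obtain ⟨hj, hju⟩ := Classical.choose_spec hex
      by_cases hji : Classical.choose hex = i
      · rw [hji]
      · exact absurd hu (hWdisj _ i hj hi hji u hju)
    have hϑτ : ∀ u, (∀ i, i < m → u ∉ (g i).2.2.2) → ϑ u = τc u := by
      intro u hu
      rw [hϑ]
      have hne : ¬ ∃ i, i < m ∧ u ∈ (g i).2.2.2 := by
        rintro ⟨i, hi, hui⟩
        exact hu i hi hui
      simp only [dif_neg hne]
    have hranges : Finset.range ((Rule.subst (fun n => Term.var (π n)) r).body.length)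
        = Finset.range m := by rw [hlen_old]
    have hrangesN : Finset.range ((Rule.subst ρ₂ r).body.length) = Finset.range m := by
      rw [hlen_new]
    rw [hrangesN, ← hranges] at htree
    refine ⟨_, _, ϑ, Wt, ?_, ?_, htree, ?_, ?_, ?_, ?_⟩
    · -- W finite
      apply Set.Finite.union ((Rule.vars_finite r).image π₂)
      apply Set.Finite.biUnion (Finset.range m).finite_toSet
      intro i hi
      exact hWfin' i (by simpa using hi)
    · -- W ∩ V = ∅
      apply Set.eq_empty_of_subset_empty
      rintro v ⟨hv, hvV⟩
      rcases hv with h | h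
      · exact absurd hvV (himgV v h)
      · simp only [Set.mem_iUnion] at h
        obtain ⟨i, hi, hvi⟩ := h
        exact absurd (Set.mem_union_left _ hvV)
          (hWnotBase i (by simpa using hi) v hvi)
    · -- variable bound
      rw [hranges, setVars_biUnion_range, setVars_biUnion_range]
      intro v hv
      have hvex : ∃ i, i < m ∧ (v ∈ setVars (g i).1 ∪ setVars (g i).2.1) := by
        rcases hv with h | h <;>
        · simp only [Set.mem_iUnion] at h
          obtain ⟨i, hi, hvi⟩ := h
          exact ⟨i, by simpa using hi, by first
            | exact Set.mem_union_left _ hvi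
            | exact Set.mem_union_right _ hvi⟩
      obtain ⟨i, him, hvi⟩ := hvex
      rcases q4 i him v hvi with h | h
      · rcases hcNewB i him h with h' | h'
        · exact Set.mem_union_left _ h'
        · exact Set.mem_union_right _ (Set.mem_union_left _ h')
      · refine Set.mem_union_right _ (Set.mem_union_right _ ?_)
        exact Set.mem_iUnion.mpr ⟨i, Set.mem_iUnion.mpr ⟨Finset.mem_range.mpr him, h⟩⟩
    · -- ϑ agrees with θ off W
      intro v hv
      have h1 : ∀ i, i < m → v ∉ (g i).2.2.2 := by
        intro i hi hvi
        exact hv (Set.mem_union_right _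
          (Set.mem_iUnion.mpr ⟨i, Set.mem_iUnion.mpr ⟨Finset.mem_range.mpr hi, hvi⟩⟩))
      rw [hϑτ v h1]
      have h2 : v ∉ π₂ '' (Rule.vars r \ {n | n ∈ xs₀}) := fun hmem =>
        hv (Set.mem_union_left _ (Set.image_mono Set.diff_subset hmem))
      rw [hτc]
      simp only [if_neg h2]
    · -- C equation
      rw [hranges]
      simp only [substSet, Set.image_iUnion]
      apply Set.iUnion_congr
      intro i
      apply Set.iUnion_congr
      intro hi
      have him : i < m := Finset.mem_range.mp hi
      rw [q6 i him]
      apply substSet_congr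
      intro v hv
      rcases q4 i him v (Set.mem_union_left _ hv) with hvc | hvw
      · have h1 : ∀ j, j < m → v ∉ (g j).2.2.2 := fun j hj hvj =>
          hWnotBase j hj v hvj (hcNewBase i him hvc)
        rw [hϑτ v h1, q5 i him v (h1 i him)]
      · rw [hϑW' i him v hvw]
    · -- A equation
      rw [hranges]
      simp only [substSet, Set.image_iUnion]
      apply Set.iUnion_congr
      intro i
      apply Set.iUnion_congr
      intro hi
      have him : i < m := Finset.mem_range.mp hi
      rw [q7 i him]
      apply substSet_congr
      intro v hv
      rcases q4 i him v (Set.mem_union_right _ hv) with hvc | hvw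
      · have h1 : ∀ j, j < m → v ∉ (g j).2.2.2 := fun j hj hvj =>
          hWnotBase j hj v hvj (hcNewBase i him hvc)
        rw [hϑτ v h1, q5 i him v (h1 i him)]
      · rw [hϑW' i him v hvw]

theorem constrainedInstance_refl (fc : CABA F P D) {α : CArgument F P}
    (h : fc.ConsistentSet α.con) : ConstrainedInstanceOf fc α α :=
  ⟨Term.var, ∅, Set.empty_subset _, by rw [substSet_id, Set.union_empty],
    (substSet_id _).symm, rfl, (Atom.subst_id _).symm, h⟩

theorem constrainedInstance_trans (fc : CABA F P D) {γ β α : CArgument F P}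
    (h1 : ConstrainedInstanceOf fc γ β) (h2 : ConstrainedInstanceOf fc β α) :
    ConstrainedInstanceOf fc γ α := by
  obtain ⟨ϑ1, D1, hD1, hc1, ha1, hr1, hcl1, hcons1⟩ := h1
  obtain ⟨ϑ2, D2, hD2, hc2, ha2, hr2, hcl2, _⟩ := h2
  refine ⟨fun n => Term.substT ϑ1 (ϑ2 n), substSet ϑ1 D2 ∪ D1, ?_, ?_, ?_, ?_, ?_, hcons1⟩
  · apply Set.union_subset _ hD1
    rintro a ⟨b, hb, rfl⟩
    exact fc.con_closed.subst_mem _ (hD2 hb)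
  · rw [hc1, hc2, substSet_union, substSet_comp, Set.union_assoc]
  · rw [ha1, ha2, substSet_comp]
  · rw [hr1, hr2]
  · rw [hcl1, hcl2, Atom.subst_comp]

theorem main_ground_eq (fc : CABA F P D) :
    GrCInstSet fc (CArg fc) = GrCInstSet fc (MGCArg fc) := by
  apply subset_antisymm
  · intro x hx
    simp only [GrCInstSet, Set.mem_iUnion] at hx ⊢
    obtain ⟨α, hα, hinst, hgr⟩ := hx
    obtain ⟨β, hβ, hαβ⟩ := hα
    obtain ⟨htight, hcons⟩ := hβ
    set zs : List ℕ := List.range β.claim.args.length with hzs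
    have hnd : zs.Nodup := List.nodup_range
    have hlenzs : zs.length = β.claim.args.length := by rw [hzs]; exact List.length_range
    have hcl : β.claim
        = (Atom.mk β.claim.pred (zs.map Term.var)).subst (mkSubst zs β.claim.args) := by
      show β.claim = Atom.mk β.claim.pred
        (Term.substL (mkSubst zs β.claim.args) (zs.map Term.var))
      rw [substL_mkSubst_map_var hnd hlenzs]
    obtain ⟨C', A', ϑ₀, W, hWfin, hWV, htf, hbound, hoff, hCeq, hAeq⟩ :=
      lift_tight fc htight (Atom.mk β.claim.pred (zs.map Term.var))
        (mkSubst zs β.claim.args) (Atom.mk β.claim.pred (zs.map Term.var)).vars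
        (Atom.vars_finite _) subset_rfl hcl
    set μ : CArgument F P := ⟨C', A', β.rules, Atom.mk β.claim.pred (zs.map Term.var)⟩
      with hμ
    have hμcons : fc.ConsistentSet C' := by
      apply fc.consistent_of_substSet (θ := ϑ₀)
      rw [← hCeq]
      exact hcons
    have hμMG : μ ∈ MGCArg fc := ⟨⟨htf, hμcons⟩, zs, hnd, rfl⟩
    have hclaim : μ.claim.subst ϑ₀ = β.claim := by
      have h1 : μ.claim.subst ϑ₀ = μ.claim.subst (mkSubst zs β.claim.args) :=
        Atom.subst_congr _ (fun v hv => hoff v (fun hvW =>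
          Set.eq_empty_iff_forall_notMem.mp hWV v ⟨hvW, hv⟩))
      rw [h1, ← hcl]
    have hβμ : ConstrainedInstanceOf fc β μ := by
      refine ⟨ϑ₀, ∅, Set.empty_subset _, ?_, hAeq, rfl, hclaim.symm, hcons⟩
      rw [Set.union_empty]
      exact hCeq
    exact ⟨μ, hμMG, constrainedInstance_trans fc hinst
      (constrainedInstance_trans fc hαβ hβμ), hgr⟩
  · intro x hx
    simp only [GrCInstSet, Set.mem_iUnion] at hx ⊢
    obtain ⟨μ, hμ, hinst, hgr⟩ := hx
    exact ⟨μ, ⟨μ, hμ.1, constrainedInstance_refl fc hμ.1.2⟩, hinst, hgr⟩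
end CABAFormal

open CABAFormal in
/-- The set of all ground constrained arguments `GrCInst(CArg)` equals
`GrCInst(MGCArg)`, the ground constrained instances of the most general
constrained arguments. -/
theorem groundCArg_eq_grCInst_MGCArg {F P D : Type} (fc : CABA F P D) :
    GrCInstSet fc (CArg fc) = GrCInstSet fc (MGCArg fc) := CABAFormal.main_ground_eq fc
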